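/- arXiv:2011.14348 — 6 statements merged into one kernel-verified Lean document; each statement's English description precedes it below -/
import Mathlib

section
/- Let a and b be integers such that f(x) = x^6 + a x + b is irreducible over ℚ, and let θ be a root of f. Then the discriminant of the ℚ-basis (1, θ, θ^2, θ^3, θ^4, θ^5) of K = ℚ(θ) (equivalently, the discriminant of the polynomial f) equals 5^5·a^6 − 6^6·b^5. -/
open Polynomial NumberField

open IntermediateField Module

set_option maxHeartbeats 2000000
set_option maxRecDepth 8000

/-- The discriminant of the basis `(1, θ, θ², θ³, θ⁴, θ⁵)` of the sextic field
`K = ℚ(θ)`, where `θ` is a root of the irreducible trinomial `x⁶ + a x + b ∈ ℤ[x]`,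
equals `5⁵ a⁶ − 6⁶ b⁵`. -/
theorem discr_powerBasis_of_sextic_trinomial (a b : ℤ) (K : Type) [Field K] [NumberField K]
    (θ : K)
    (hf : Irreducible ((X : ℚ[X]) ^ 6 + C (a : ℚ) * X + C (b : ℚ)))
    (hroot : θ ^ 6 + (a : K) * θ + (b : K) = 0)
    (hK : IntermediateField.adjoin ℚ {θ} = ⊤) :
    Algebra.discr ℚ (fun i : Fin 6 => θ ^ (i : ℕ)) =
      ((5 ^ 5 * a ^ 6 - 6 ^ 6 * b ^ 5 : ℤ) : ℚ) := by
  set f : ℚ[X] := X ^ 6 + C (a : ℚ) * X + C (b : ℚ) with hfdef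
  have hmonic : f.Monic := by
    rw [hfdef]; monicity!
  have hdeg : f.natDegree = 6 := by
    rw [hfdef]; compute_degree!
  have haev : Polynomial.aeval θ f = 0 := by
    rw [hfdef]
    simp only [map_add, map_mul, map_pow, aeval_X, aeval_C]
    convert hroot using 2 <;> simp
  have hint : IsIntegral ℚ θ := IsIntegral.of_finite ℚ θ
  have hmin : minpoly ℚ θ = f := (minpoly.eq_of_irreducible_of_monic hf haev hmonic).symm
  let e : ℚ⟮θ⟯ ≃ₐ[ℚ] K := (IntermediateField.equivOfEq hK).trans IntermediateField.topEquiv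
  let pb : PowerBasis ℚ K := (IntermediateField.adjoin.powerBasis hint).map e
  have hgen : pb.gen = θ := by
    simp [pb, e]
  have hdim : pb.dim = 6 := by
    show (minpoly ℚ θ).natDegree = 6
    rw [hmin, hdeg]
  have hrank : Module.finrank ℚ K = 6 := by rw [pb.finrank, hdim]
  let b6 : Basis (Fin 6) ℚ K := pb.basis.reindex (finCongr hdim)
  have hb6 : ∀ i : Fin 6, b6 i = θ ^ (i : ℕ) := by
    intro i
    simp [b6, PowerBasis.coe_basis, hgen]
  have key : Algebra.discr ℚ (fun i : Fin 6 => θ ^ (i : ℕ)) = Algebra.discr ℚ pb.basis := by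
    rw [← Algebra.discr_reindex (A := ℚ) pb.basis (finCongr hdim)]
    congr 1
    funext i
    simp [Function.comp, PowerBasis.coe_basis, hgen]
  rw [key, Algebra.discr_powerBasis_eq_norm, hrank, hgen, hmin]
  have hθ6 : θ ^ 6 = -((a : K) * θ + (b : K)) := by linear_combination hroot
  set α : K := 6 * θ ^ 5 + (a : K) with hα
  have hder : Polynomial.aeval θ (derivative (R := ℚ) f) = α := by
    rw [hfdef]
    simp [derivative_X_pow]
    try push_cast
    try ring
  rw [hder]
  let M : Matrix (Fin 6) (Fin 6) ℚ :=
    !![(a:ℚ), -6*b, 0, 0, 0, 0;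
       0, -5*a, -6*b, 0, 0, 0;
       0, 0, -5*a, -6*b, 0, 0;
       0, 0, 0, -5*a, -6*b, 0;
       0, 0, 0, 0, -5*a, -6*b;
       6, 0, 0, 0, 0, -5*a]
  have hlm : Algebra.leftMulMatrix b6 α = M := by
    rw [show Algebra.leftMulMatrix b6 α = LinearMap.toMatrix b6 b6 (Algebra.lmul ℚ K α) from rfl]
    rw [← LinearMap.toMatrix_toLin b6 b6 M]
    congr 1
    apply b6.ext
    have hmul : ∀ y x : K, (Algebra.lmul ℚ K) y x = y * x := fun y x => rfl
    simp only [Fin.forall_fin_succ, IsEmpty.forall_iff, and_true, Matrix.toLin_self]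
    simp only [Fin.sum_univ_succ, Finset.univ_eq_empty, Finset.sum_empty, hmul, hα, hb6, M,
      Matrix.cons_val_succ, Matrix.cons_val_zero, Matrix.of_apply,
      Fin.val_succ, Fin.val_zero, Rat.smul_def, add_zero, pow_zero, pow_one]
    push_cast
    refine ⟨by ring, ?_, ?_, ?_, ?_, ?_⟩
    · linear_combination (6:K) * hθ6
    · linear_combination 6 * θ * hθ6
    · linear_combination 6 * θ^2 * hθ6
    · linear_combination 6 * θ^3 * hθ6
    · linear_combination 6 * θ^4 * hθ6
  have hnorm : Algebra.norm ℚ α = Matrix.det M := by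
    rw [Algebra.norm_eq_matrix_det b6 α, hlm]
  rw [hnorm]
  have hdet : Matrix.det M = -(5:ℚ)^5 * a^6 + 6^6 * b^5 := by
    set_option maxHeartbeats 2000000 in
    set_option maxRecDepth 8000 in
    simp only [M, Matrix.det_succ_row_zero, Fin.sum_univ_succ, Matrix.submatrix_apply,
      Matrix.submatrix_submatrix, Function.comp_apply, Matrix.det_unique, Fin.default_eq_zero,
      Finset.univ_unique, Finset.sum_singleton, Fin.val_zero, Fin.val_succ, Fin.zero_succAbove,
      Fin.succ_succAbove_zero, Fin.succ_succAbove_succ, Matrix.cons_val_zero, Matrix.cons_val_succ,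
      Matrix.of_apply]
    norm_num
    ring
  rw [hdet]
  push_cast
  ring
end

section
/- Let L = ℚ(ξ) be an algebraic number field of degree n with ξ an algebraic integer, with ring of integers A_L, and assume A_L ≠ ℤ[ξ]. Let p_1, …, p_s be the distinct primes dividing the index [A_L : ℤ[ξ]]. For each r with 1 ≤ r ≤ s, suppose {α_{r,0}, α_{r,1}, …, α_{r,n−1}} is a ℤ_{(p_r)}-basis of the integral closure of ℤ_{(p_r)} in L, where α_{r,0} = 1 and α_{r,i} = (c^{(r)}_{i0} + c^{(r)}_{i1}ξ + ⋯ + c^{(r)}_{i,i−1}ξ^{i−1} + ξ^i)/p_r^{k_{i,r}} with integers c^{(r)}_{ij} and integers 0 ≤ k_{i,r} ≤ k_{i+1,r}. Choose integers c_{ij} with c_{ij} ≡ c^{(r)}_{ij} (mod p_r^{k_{i,r}}) for all 1 ≤ r ≤ s, and set t_i = ∏_{r=1}^{s} p_r^{k_{i,r}}. Then {α_0, α_1, …, α_{n−1}} is a ℤ-basis of A_L, where α_0 = 1 and α_i = (c_{i0} + c_{i1}ξ + ⋯ + c_{i,i−1}ξ^{i−1} + ξ^i)/t_i for 1 ≤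 i ≤ n−1. -/
open Polynomial NumberField

/-- An element `x` of a number field `L` is `p`-integral, i.e. it belongs to the
integral closure `S₍ₚ₎` of `ℤ₍ₚ₎` in `L`: it can be written as `α / s` with `α` an
algebraic integer and `s ∈ ℤ ∖ pℤ`. -/
def IsPIntegral (p : ℕ) {L : Type*} [Field L] [Algebra ℚ L] (x : L) : Prop :=
  ∃ s : ℤ, ¬ (p : ℤ) ∣ s ∧ IsIntegral ℤ ((s : L) * x)

/-- A rational number belongs to the localization `ℤ₍ₚ₎` of `ℤ` at `p`. -/
def MemZLoc (p : ℕ) (q : ℚ) : Prop :=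
  ∃ m s : ℤ, ¬ (p : ℤ) ∣ s ∧ q * (s : ℚ) = (m : ℚ)

private lemma memZLoc_int (p : ℕ) (hp : p.Prime) (z : ℤ) : MemZLoc p (z : ℚ) :=
  ⟨z, 1, (Nat.prime_iff_prime_int.mp hp).not_dvd_one, by norm_num⟩

private lemma memZLoc_add {p : ℕ} (hp : p.Prime) {a b : ℚ} (ha : MemZLoc p a)
    (hb : MemZLoc p b) : MemZLoc p (a + b) := by
  obtain ⟨m1, s1, h1, e1⟩ := ha
  obtain ⟨m2, s2, h2, e2⟩ := hb
  refine ⟨m1 * s2 + m2 * s1, s1 * s2, ?_, ?_⟩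
  · intro h
    rcases (Nat.prime_iff_prime_int.mp hp).dvd_mul.mp h with h | h
    exacts [h1 h, h2 h]
  · push_cast
    calc (a + b) * ((s1 : ℚ) * s2) = (a * s1) * s2 + (b * s2) * s1 := by ring
    _ = (m1 : ℚ) * s2 + (m2 : ℚ) * s1 := by rw [e1, e2]

private lemma memZLoc_mul {p : ℕ} (hp : p.Prime) {a b : ℚ} (ha : MemZLoc p a)
    (hb : MemZLoc p b) : MemZLoc p (a * b) := by
  obtain ⟨m1, s1, h1, e1⟩ := ha
  obtain ⟨m2, s2, h2, e2⟩ := hb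
  refine ⟨m1 * m2, s1 * s2, ?_, ?_⟩
  · intro h
    rcases (Nat.prime_iff_prime_int.mp hp).dvd_mul.mp h with h | h
    exacts [h1 h, h2 h]
  · push_cast
    calc (a * b) * ((s1 : ℚ) * s2) = (a * s1) * (b * s2) := by ring
    _ = (m1 : ℚ) * m2 := by rw [e1, e2]

private lemma memZLoc_sum {p : ℕ} (hp : p.Prime) {ι : Type*} (s : Finset ι) (f : ι → ℚ)
    (h : ∀ i ∈ s, MemZLoc p (f i)) : MemZLoc p (∑ i ∈ s, f i) := by
  classical
  induction s using Finset.induction_on with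
  | empty => simpa using memZLoc_int p hp 0
  | insert a t hx ih =>
    rw [Finset.sum_insert hx]
    exact memZLoc_add hp (h _ (Finset.mem_insert_self _ _))
      (ih fun i hi => h i (Finset.mem_insert_of_mem hi))

private lemma exists_int_of_forall_memZLoc (q : ℚ)
    (h : ∀ p : ℕ, p.Prime → MemZLoc p q) : ∃ z : ℤ, q = (z : ℚ) := by
  have hden : q.den = 1 := by
    rw [Nat.eq_one_iff_not_exists_prime_dvd]
    intro p hp hdvd
    obtain ⟨m, s, hs, he⟩ := h p hp
    have hs0 : (s : ℚ) ≠ 0 := by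
      intro h0
      exact hs (by exact_mod_cast (Int.cast_eq_zero.mp h0) ▸ dvd_zero (p : ℤ))
    have hq : q = (m : ℚ) / (s : ℚ) := by
      field_simp
      linarith [he]
    have hdd : ((Rat.divInt m s).den : ℤ) ∣ s := Rat.den_dvd m s
    rw [Rat.divInt_eq_div, ← hq] at hdd
    exact hs (dvd_trans (Int.natCast_dvd_natCast.mpr hdvd) hdd)
  exact ⟨q.num, by rw [← Rat.num_div_den q, hden]; simp⟩

private lemma isIntegral_of_forall_pIntegral {L : Type} [Field L] [NumberField L] (x : L)
    (h : ∀ p : ℕ, p.Prime → IsPIntegral p x) : IsIntegral ℤ x := by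
  have hIcast : ∀ r : ℤ, IsIntegral ℤ ((r : L)) := fun r => by
    simpa using isIntegral_algebraMap (R := ℤ) (A := L) (x := r)
  set I : Ideal ℤ :=
    { carrier := {s : ℤ | IsIntegral ℤ ((s : L) * x)}
      add_mem' := fun {a b} ha hb => by
        have ha' : IsIntegral ℤ ((a : L) * x) := ha
        have hb' : IsIntegral ℤ ((b : L) * x) := hb
        show IsIntegral ℤ (((a + b : ℤ) : L) * x)
        have e : ((a + b : ℤ) : L) * x = (a : L) * x + (b : L) * x := by push_cast; ring
        rw [e]; exact ha'.add hb'
      zero_mem' := by simpa using isIntegral_zero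
      smul_mem' := fun r s hs => by
        have hs' : IsIntegral ℤ ((s : L) * x) := hs
        show IsIntegral ℤ (((r * s : ℤ) : L) * x)
        have e : ((r * s : ℤ) : L) * x = (r : L) * ((s : L) * x) := by push_cast; ring
        rw [e]; exact (hIcast r).mul hs' } with hI
  obtain ⟨g, hg⟩ := Submodule.IsPrincipal.principal I
  by_cases hu : IsUnit g
  · have h1 : (1 : ℤ) ∈ I := by
      rw [hg, Ideal.submodule_span_eq, Ideal.mem_span_singleton]
      exact hu.dvd
    have h2 : IsIntegral ℤ (((1 : ℤ) : L) * x) := h1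
    simpa using h2
  · obtain ⟨q, hq, hqg⟩ := Int.exists_prime_and_dvd (fun h1 => hu (Int.isUnit_iff_natAbs_eq.mpr h1))
    obtain ⟨s, hs, hsx⟩ := h q.natAbs (Int.prime_iff_natAbs_prime.mp hq)
    have hmem : s ∈ I := hsx
    rw [hg, Ideal.submodule_span_eq, Ideal.mem_span_singleton] at hmem
    exact absurd (Int.natAbs_dvd.mpr (hqg.trans hmem)) hs

private lemma ratlin_int_mul {L : Type*} [Field L] [Algebra ℚ L]
    (f : L →ₗ[ℚ] ℚ) (z : ℤ) (v : L) : f ((z : L) * v) = (z : ℚ) * f v := by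
  have e : ((z : L)) = algebraMap ℚ L ((z : ℤ) : ℚ) := by
    rw [eq_ratCast (algebraMap ℚ L), Rat.cast_intCast]
  rw [e, ← Algebra.smul_def, map_smul, smul_eq_mul]

private lemma ratlin_nat_mul {L : Type*} [Field L] [Algebra ℚ L]
    (f : L →ₗ[ℚ] ℚ) (z : ℕ) (v : L) : f ((z : L) * v) = (z : ℚ) * f v := by
  have e : ((z : L)) = algebraMap ℚ L ((z : ℕ) : ℚ) := by
    rw [eq_ratCast (algebraMap ℚ L), Rat.cast_natCast]
  rw [e, ← Algebra.smul_def, map_smul, smul_eq_mul]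

/-- Patching `p_r`-integral bases of the special triangular shape into an integral
basis: if for each prime `p_r` dividing the index `[A_L : ℤ[ξ]]` the elements
`α_{r,i} = (c^{(r)}_{i0} + ⋯ + c^{(r)}_{i,i−1} ξ^{i−1} + ξ^i)/p_r^{k_{i,r}}` form a
`ℤ₍ₚᵣ₎`-basis of `S₍ₚᵣ₎`, and the integers `c_{ij}` satisfy
`c_{ij} ≡ c^{(r)}_{ij} (mod p_r^{k_{i,r}})` for all `r`, then with
`t_i = ∏_r p_r^{k_{i,r}}`, the elements
`α_i = (c_{i0} + ⋯ + c_{i,i−1} ξ^{i−1} + ξ^i)/t_i` form a `ℤ`-basis of `A_L`. -/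
theorem integralBasis_of_pIntegralBases (n s : ℕ) (hn : 0 < n)
    (L : Type) [Field L] [NumberField L] (ξ : 𝓞 L)
    (hdeg : Module.finrank ℚ L = n)
    (hL : IntermediateField.adjoin ℚ {(ξ : L)} = ⊤)
    (hne : Algebra.adjoin ℤ {ξ} ≠ (⊤ : Subalgebra ℤ (𝓞 L)))
    (p : Fin s → ℕ) (hp : ∀ r, (p r).Prime) (hinj : Function.Injective p)
    (hdiv : ∀ q : ℕ, q.Prime →
      (q ∣ (Algebra.adjoin ℤ {ξ}).toSubring.toAddSubgroup.index ↔ ∃ r, p r = q))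
    (k : Fin s → Fin n → ℕ) (hk0 : ∀ r, k r ⟨0, hn⟩ = 0)
    (hkmono : ∀ r, Monotone (k r))
    (c : Fin s → Fin n → ℕ → ℤ)
    (hbasis : ∀ r : Fin s,
      (∀ i : Fin n, IsPIntegral (p r)
        ((∑ j ∈ Finset.range i, (c r i j : L) * (ξ : L) ^ j + (ξ : L) ^ (i : ℕ))
          / (p r : L) ^ k r i)) ∧
      LinearIndependent ℚ (fun i : Fin n =>
        (∑ j ∈ Finset.range i, (c r i j : L) * (ξ : L) ^ j + (ξ : L) ^ (i : ℕ))
          / (p r : L) ^ k r i) ∧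
      (∀ x : L, IsPIntegral (p r) x → ∃ d : Fin n → ℚ,
        (∀ i, MemZLoc (p r) (d i)) ∧
        x = ∑ i : Fin n, d i •
          ((∑ j ∈ Finset.range i, (c r i j : L) * (ξ : L) ^ j + (ξ : L) ^ (i : ℕ))
            / (p r : L) ^ k r i)))
    (c' : Fin n → ℕ → ℤ)
    (hc' : ∀ (r : Fin s) (i : Fin n) (j : ℕ), (p r : ℤ) ^ k r i ∣ c' i j - c r i j)
    (t : Fin n → ℕ) (ht : ∀ i : Fin n, t i = ∏ r : Fin s, p r ^ k r i) :
    ∃ B : Module.Basis (Fin n) ℤ (𝓞 L), ∀ i : Fin n,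
      (B i : L) = (∑ j ∈ Finset.range i, (c' i j : L) * (ξ : L) ^ j + (ξ : L) ^ (i : ℕ))
        / (t i : L) := by
  classical
  set ξL : L := (ξ : L) with hξL
  set N : Fin n → L :=
    fun i => ∑ j ∈ Finset.range i, (c' i j : L) * ξL ^ j + ξL ^ (i : ℕ) with hNdef
  set β : Fin n → L := fun i => N i / (t i : L) with hβdef
  set α : Fin s → Fin n → L := fun r i =>
    (∑ j ∈ Finset.range i, (c r i j : L) * ξL ^ j + ξL ^ (i : ℕ)) / (p r : L) ^ k r i
    with hαdef
  have htpos : ∀ i, 0 < t i := fun i => by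
    rw [ht]; exact Finset.prod_pos fun r _ => pow_pos (hp r).pos _
  have htL : ∀ i, ((t i : ℕ) : L) ≠ 0 := fun i => Nat.cast_ne_zero.mpr (htpos i).ne'
  have hpL : ∀ (r : Fin s) (e : ℕ), ((p r : ℕ) : L) ^ e ≠ 0 := fun r e =>
    pow_ne_zero _ (Nat.cast_ne_zero.mpr (hp r).pos.ne')
  have hNmul : ∀ i, ((t i : ℕ) : L) * β i = N i := fun i => by
    rw [hβdef]; exact mul_div_cancel₀ _ (htL i)
  have hNint : ∀ i, IsIntegral ℤ (N i) := by
    intro i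
    have hcoe : N i =
        ((∑ j ∈ Finset.range i, (c' i j : 𝓞 L) * ξ ^ j + ξ ^ (i : ℕ) : 𝓞 L) : L) := by
      push_cast
      try rfl
    rw [hcoe]
    exact RingOfIntegers.isIntegral_coe _
  -- the key relation between α and β
  have hkey : ∀ (r : Fin s) (j : Fin n), ∃ m : ℕ, ¬ p r ∣ m ∧ t j = p r ^ k r j * m ∧
      ∃ eI : ℕ → ℤ,
        α r j = (m : L) * β j - ∑ l ∈ Finset.range j, (eI l : L) * ξL ^ l := by
    intro r j
    refine ⟨∏ r' ∈ Finset.univ.erase r, p r' ^ k r' j, ?_, ?_, ?_⟩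
    · intro hd
      obtain ⟨a, ha, hdvd⟩ := ((hp r).prime.dvd_finset_prod_iff _).mp hd
      have : p r = p a :=
        (Nat.prime_dvd_prime_iff_eq (hp r) (hp a)).mp ((hp r).prime.dvd_of_dvd_pow hdvd)
      exact (Finset.mem_erase.mp ha).1 (hinj this.symm)
    · rw [ht]
      exact (Finset.mul_prod_erase Finset.univ _ (Finset.mem_univ r)).symm
    · choose eI heI using fun l => hc' r j l
      refine ⟨eI, ?_⟩
      set m : ℕ := ∏ r' ∈ Finset.univ.erase r, p r' ^ k r' j with hmdef
      have htm : (t j : ℕ) = p r ^ k r j * m := by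
        rw [ht]
        exact (Finset.mul_prod_erase Finset.univ _ (Finset.mem_univ r)).symm
      have hm0 : (m : L) ≠ 0 := by
        have : 0 < m := Finset.prod_pos fun r' _ => pow_pos (hp r').pos _
        exact_mod_cast this.ne'
      have hmb : (m : L) * β j = N j / ((p r : L) ^ k r j) := by
        rw [hβdef]
        simp only []
        rw [show ((t j : ℕ) : L) = (p r : L) ^ k r j * (m : L) from by
          rw [htm]; push_cast; ring]
        have hpk := hpL r (k r j)
        field_simp
      have hcoef : ∀ l, (c r j l : L) = (c' j l : L) - (p r : L) ^ k r j * (eI l : L) := by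
        intro l
        have h2 : (c r j l : ℤ) = c' j l - (p r : ℤ) ^ k r j * eI l := by
          have := heI l; linarith
        calc (c r j l : L) = ((c' j l - (p r : ℤ) ^ k r j * eI l : ℤ) : L) := by
              exact_mod_cast congrArg (fun z : ℤ => (z : L)) h2
          _ = (c' j l : L) - (p r : L) ^ k r j * (eI l : L) := by push_cast; ring
      rw [hαdef]
      simp only []
      rw [Finset.sum_congr rfl (fun l _ => by rw [hcoef l] :
        ∀ l ∈ Finset.range (j : ℕ), (c r j l : L) * ξL ^ l
          = ((c' j l : L) - (p r : L) ^ k r j * (eI l : L)) * ξL ^ l)]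
      have hsum : ∑ l ∈ Finset.range (j : ℕ),
            ((c' j l : L) - (p r : L) ^ k r j * (eI l : L)) * ξL ^ l
          = (∑ l ∈ Finset.range (j : ℕ), (c' j l : L) * ξL ^ l)
            - (p r : L) ^ k r j * ∑ l ∈ Finset.range (j : ℕ), (eI l : L) * ξL ^ l := by
        rw [Finset.mul_sum, ← Finset.sum_sub_distrib]
        exact Finset.sum_congr rfl fun l _ => by ring
      rw [hsum, hmb, hNdef]
      simp only []
      have hpk := hpL r (k r j)
      field_simp
      ring
  have hcastint : ∀ z : ℤ, IsIntegral ℤ ((z : L)) := fun z => by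
    simpa using isIntegral_algebraMap (R := ℤ) (A := L) (x := z)
  have hintZ : IsIntegral ℤ ξL := RingOfIntegers.isIntegral_coe ξ
  have hsumint : ∀ (eI : ℕ → ℤ) (j : ℕ),
      IsIntegral ℤ (∑ l ∈ Finset.range j, (eI l : L) * ξL ^ l) :=
    fun eI j => IsIntegral.sum _ fun l _ => (hcastint (eI l)).mul (hintZ.pow l)
  -- β is integral at every prime
  have hβint : ∀ i, IsIntegral ℤ (β i) := by
    intro i
    apply isIntegral_of_forall_pIntegral
    intro q hq
    by_cases hqr : ∃ r, p r = q
    · obtain ⟨r, rfl⟩ := hqr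
      obtain ⟨m, hnd, htm, eI, hid⟩ := hkey r i
      obtain ⟨s₀, hs₀, hint⟩ := (hbasis r).1 i
      have hintα : IsIntegral ℤ ((s₀ : L) * α r i) := hint
      refine ⟨s₀ * (m : ℤ), ?_, ?_⟩
      · intro hd
        rcases (Nat.prime_iff_prime_int.mp (hp r)).dvd_mul.mp hd with h | h
        · exact hs₀ h
        · exact hnd (Int.natCast_dvd_natCast.mp h)
      · have hmβ : (m : L) * β i = α r i + ∑ l ∈ Finset.range i, (eI l : L) * ξL ^ l := by
          rw [hid]; ring
        have e : ((s₀ * (m : ℤ) : ℤ) : L) * β i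
            = (s₀ : L) * α r i + (s₀ : L) * (∑ l ∈ Finset.range i, (eI l : L) * ξL ^ l) := by
          push_cast
          rw [mul_assoc, hmβ]
          ring
        rw [e]
        exact hintα.add ((hcastint s₀).mul (hsumint eI i))
    · refine ⟨(t i : ℤ), ?_, ?_⟩
      · intro hd
        have hdt : q ∣ t i := by exact_mod_cast hd
        rw [ht] at hdt
        obtain ⟨r, -, hdvd⟩ := (hq.prime.dvd_finset_prod_iff _).mp hdt
        exact hqr ⟨r,
          ((Nat.prime_dvd_prime_iff_eq hq (hp r)).mp (hq.prime.dvd_of_dvd_pow hdvd)).symm⟩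
      · have e : (((t i : ℤ)) : L) * β i = N i := by
          rw [← hNmul i]; push_cast; ring
        rw [e]
        exact hNint i
  -- the ℚ-basis given by β
  have hintQ : IsIntegral ℚ ξL := hintZ.tower_top
  let pbL : PowerBasis ℚ L := (IntermediateField.adjoin.powerBasis hintQ).map
    ((IntermediateField.equivOfEq hL).trans IntermediateField.topEquiv)
  have hgen : pbL.gen = ξL := by
    simp [pbL, PowerBasis.map_gen]
    try rfl
  have hdim : pbL.dim = n := by rw [← PowerBasis.finrank pbL, hdeg]
  have hxi : ∀ i : Fin n,
      ξL ^ (i : ℕ) = ((t i : ℕ) : L) * β i - ∑ j ∈ Finset.range i, (c' i j : L) * ξL ^ j := by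
    intro i
    rw [hNmul i, hNdef]
    ring
  have hspan : ∀ d : ℕ, d < n → ξL ^ d ∈ Submodule.span ℚ (Set.range β) := by
    intro d
    induction d using Nat.strong_induction_on with
    | _ d IH =>
      intro hdn
      have hxi' := hxi ⟨d, hdn⟩
      simp only [] at hxi'
      rw [hxi']
      refine sub_mem ?_ (Submodule.sum_mem _ fun j hj => ?_)
      · rw [show ((t ⟨d, hdn⟩ : ℕ) : L) * β ⟨d, hdn⟩
            = ((t ⟨d, hdn⟩ : ℕ) : ℚ) • β ⟨d, hdn⟩ from by rw [Rat.smul_def]; norm_num]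
        exact Submodule.smul_mem _ _ (Submodule.subset_span ⟨_, rfl⟩)
      · rw [show (((c' ⟨d, hdn⟩ j : ℤ)) : L) * ξL ^ j
            = ((c' ⟨d, hdn⟩ j : ℤ) : ℚ) • ξL ^ j from by rw [Rat.smul_def]; norm_num]
        exact Submodule.smul_mem _ _
          (IH j (Finset.mem_range.mp hj) (lt_trans (Finset.mem_range.mp hj) hdn))
  have hle : ⊤ ≤ Submodule.span ℚ (Set.range β) := by
    calc (⊤ : Submodule ℚ L) = Submodule.span ℚ (Set.range pbL.basis) :=
          pbL.basis.span_eq.symm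
    _ ≤ Submodule.span ℚ (Set.range β) := by
        rw [Submodule.span_le]
        rintro _ ⟨j, rfl⟩
        rw [pbL.coe_basis, hgen]
        exact hspan j (by rw [← hdim]; exact j.2)
  let Bβ : Module.Basis (Fin n) ℚ L :=
    basisOfTopLeSpanOfCardEqFinrank β hle (by rw [Fintype.card_fin, hdeg])
  have hBβ : ∀ i, Bβ i = β i := fun i => by
    rw [show Bβ = basisOfTopLeSpanOfCardEqFinrank β hle (by rw [Fintype.card_fin, hdeg])
      from rfl, coe_basisOfTopLeSpanOfCardEqFinrank]
  set co : Fin n → L →ₗ[ℚ] ℚ := fun i => Bβ.coord i with hco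
  set R : Subring ℚ := (algebraMap ℤ ℚ).range with hR
  have hRmem : ∀ q : ℚ, q ∈ R ↔ ∃ z : ℤ, q = (z : ℚ) := by
    intro q
    simp [hR, RingHom.mem_range, eq_comm]
  have hRint : ∀ z : ℤ, (z : ℚ) ∈ R := fun z => ⟨z, rfl⟩
  have hRnat : ∀ z : ℕ, (z : ℚ) ∈ R := fun z => ⟨z, by push_cast; rfl⟩
  have hcoβ : ∀ i j, co i (β j) ∈ R := by
    intro i j
    have : co i (β j) = Bβ.repr (Bβ j) i := by rw [hco, Module.Basis.coord_apply, hBβ]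
    rw [this, Bβ.repr_self, Finsupp.single_apply]
    split
    · exact hRint 1
    · exact hRint 0
  -- minimal polynomial facts
  have hgdeg : (minpoly ℤ ξL).natDegree = n := by
    have h1 : minpoly ℚ ξL = (minpoly ℤ ξL).map (algebraMap ℤ ℚ) := by
      simpa using minpoly.isIntegrallyClosed_eq_field_fractions ℚ L (S := L) (s := ξL) hintZ
    have h2 : ((minpoly ℤ ξL).map (algebraMap ℤ ℚ)).natDegree = (minpoly ℤ ξL).natDegree :=
      Polynomial.natDegree_map_eq_of_injective (algebraMap ℤ ℚ).injective_int _
    rw [← h2, ← h1, ← hgen, pbL.natDegree_minpoly, hdim]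
  have hcopow : ∀ d : ℕ, ∀ i, co i (ξL ^ d) ∈ R := by
    intro d
    induction d using Nat.strong_induction_on with
    | _ d IH =>
      intro i
      by_cases hdn : d < n
      · have hxi' := hxi ⟨d, hdn⟩
        simp only [] at hxi'
        rw [hxi', map_sub, map_sum, ratlin_nat_mul]
        refine sub_mem (mul_mem (hRnat _) (hcoβ i ⟨d, hdn⟩)) (sum_mem fun j hj => ?_)
        rw [ratlin_int_mul]
        exact mul_mem (hRint _) (IH j (Finset.mem_range.mp hj) i)
      · set g := minpoly ℤ ξL with hgdef
        have hmonic : g.Monic := minpoly.monic hintZ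
        have h0 := minpoly.aeval ℤ ξL
        rw [aeval_eq_sum_range] at h0
        rw [show (minpoly ℤ ξL).natDegree = n from hgdeg] at h0
        rw [Finset.sum_range_succ] at h0
        have hcn : g.coeff n = 1 := by
          rw [hgdef, ← hgdeg]; exact hmonic.coeff_natDegree
        rw [show (minpoly ℤ ξL).coeff n = 1 from hcn, one_smul] at h0
        simp only [zsmul_eq_mul] at h0
        have hxn : ξL ^ n = - ∑ l ∈ Finset.range n, ((minpoly ℤ ξL).coeff l : L) * ξL ^ l := by
          linear_combination h0
        have hd' : d = (d - n) + n := (Nat.sub_add_cancel (le_of_not_gt hdn)).symm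
        have hpowid : ξL ^ d
            = - ∑ j ∈ Finset.range n, ((minpoly ℤ ξL).coeff j : L) * ξL ^ (d - n + j) := by
          conv_lhs => rw [hd']
          rw [pow_add, hxn, mul_neg, Finset.mul_sum]
          congr 1
          exact Finset.sum_congr rfl fun j _ => by rw [pow_add]; ring
        rw [hpowid, map_neg, map_sum]
        refine neg_mem (sum_mem fun j hj => ?_)
        rw [ratlin_int_mul]
        refine mul_mem (hRint _) (IH (d - n + j) ?_ i)
        have hjn := Finset.mem_range.mp hj
        omega
  -- coordinates of elements of ℤ[ξ]
  have hadj : ∀ y : 𝓞 L, y ∈ Algebra.adjoin ℤ {ξ} → ∀ i, co i (y : L) ∈ R := by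
    intro y hy i
    rw [Algebra.adjoin_singleton_eq_range_aeval] at hy
    obtain ⟨P, hP⟩ := hy
    have hyL : (y : L) = aeval ξL P := by
      rw [← hP]
      simpa using (Polynomial.aeval_algebraMap_apply L ξ P).symm
    rw [hyL, aeval_eq_sum_range, map_sum]
    refine sum_mem fun j hj => ?_
    have hterm : co i (P.coeff j • ξL ^ j) = (P.coeff j : ℚ) * co i (ξL ^ j) := by
      rw [show P.coeff j • ξL ^ j = (P.coeff j : L) * ξL ^ j from by
        simp [zsmul_eq_mul], ratlin_int_mul]
    rw [hterm]
    exact mul_mem (hRint _) (hcopow j i)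
  -- the index
  set m0 : ℕ := (Algebra.adjoin ℤ {ξ}).toSubring.toAddSubgroup.index with hm0def
  have hG : ∀ x : 𝓞 L, m0 • x ∈ Algebra.adjoin ℤ {ξ} := fun x => by
    have h := AddSubgroup.nsmul_index_mem (Algebra.adjoin ℤ {ξ}).toSubring.toAddSubgroup x
    rw [Subring.mem_toAddSubgroup, Subalgebra.mem_toSubring] at h
    exact h
  have hcoint : ∀ (x : 𝓞 L) (i : Fin n), ∃ z : ℤ, co i (x : L) = (z : ℚ) := by
    intro x i
    apply exists_int_of_forall_memZLoc
    intro q hq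
    by_cases hqr : ∃ r, p r = q
    · obtain ⟨r, rfl⟩ := hqr
      have hpx : IsPIntegral (p r) (x : L) := by
        refine ⟨1, (Nat.prime_iff_prime_int.mp (hp r)).not_dvd_one, ?_⟩
        simpa using RingOfIntegers.isIntegral_coe x
      obtain ⟨d, hdz, hxd⟩ := (hbasis r).2.2 (x : L) hpx
      have hxd' : (x : L) = ∑ j : Fin n, d j • α r j := hxd
      have hcoα : ∀ j, co i (α r j) ∈ R := by
        intro j
        obtain ⟨m, hnd, htm, eI, hid⟩ := hkey r j
        rw [hid, map_sub, ratlin_nat_mul, map_sum]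
        refine sub_mem (mul_mem (hRnat _) (hcoβ i j)) (sum_mem fun l hl => ?_)
        rw [ratlin_int_mul]
        exact mul_mem (hRint _) (hcopow l i)
      rw [hxd', map_sum]
      refine memZLoc_sum (hp r) _ _ fun j _ => ?_
      rw [map_smul, smul_eq_mul]
      obtain ⟨z, hz⟩ := (hRmem _).mp (hcoα j)
      rw [hz]
      exact memZLoc_mul (hp r) (hdz j) (memZLoc_int _ (hp r) z)
    · have hqm : ¬ (q : ℤ) ∣ (m0 : ℤ) := by
        intro hd
        exact hqr ((hdiv q hq).mp (by exact_mod_cast hd))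
      obtain ⟨z, hz⟩ := (hRmem _).mp (hadj (m0 • x) (hG x) i)
      have hsm : co i ((m0 • x : 𝓞 L) : L) = (m0 : ℚ) * co i (x : L) := by
        have e : ((m0 • x : 𝓞 L) : L) = m0 • (x : L) :=
          map_nsmul (algebraMap (𝓞 L) L) m0 x
        rw [e, map_nsmul, nsmul_eq_mul]
      rw [hsm] at hz
      refine ⟨z, (m0 : ℤ), hqm, ?_⟩
      push_cast
      linarith [hz]
  -- conclusion
  set βO : Fin n → 𝓞 L := fun i => ⟨β i, hβint i⟩ with hβO
  have hcoeβO : ∀ i, (βO i : L) = β i := fun i => rfl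
  have hspanO : ⊤ ≤ Submodule.span ℤ (Set.range βO) := by
    intro x _
    choose z hz using hcoint x
    have hX : (x : L) = ∑ i : Fin n, (z i : ℚ) • β i := by
      conv_lhs => rw [← Bβ.sum_repr (x : L)]
      refine Finset.sum_congr rfl fun i _ => ?_
      rw [hBβ i]
      congr 1
      have e : Bβ.repr (x : L) i = co i (x : L) := (Module.Basis.coord_apply Bβ i (x : L)).symm
      rw [e, hz i]
    have hXO : x = ∑ i : Fin n, z i • βO i := by
      apply RingOfIntegers.coe_injective
      show ((x : 𝓞 L) : L) = ((∑ i : Fin n, z i • βO i : 𝓞 L) : L)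
      rw [show ((∑ i : Fin n, z i • βO i : 𝓞 L) : L)
        = algebraMap (𝓞 L) L (∑ i : Fin n, z i • βO i) from rfl]
      rw [map_sum, hX]
      refine Finset.sum_congr rfl fun i _ => ?_
      rw [map_zsmul, ← Int.cast_smul_eq_zsmul ℚ]
      rfl
    rw [hXO]
    exact Submodule.sum_mem _ fun i _ => Submodule.smul_mem _ _ (Submodule.subset_span ⟨i, rfl⟩)
  have hli : LinearIndependent ℤ βO := by
    rw [Fintype.linearIndependent_iff]
    intro g hg
    have hg' : ∑ i : Fin n, (g i : ℚ) • β i = 0 := by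
      have hc := congrArg (algebraMap (𝓞 L) L) hg
      rw [map_sum, map_zero] at hc
      rw [← hc]
      refine Finset.sum_congr rfl fun i _ => ?_
      rw [map_zsmul, ← Int.cast_smul_eq_zsmul ℚ]
      rfl
    have hg0 := Fintype.linearIndependent_iff.mp Bβ.linearIndependent (fun i => (g i : ℚ))
      (by simpa only [hBβ] using hg')
    intro i
    have := hg0 i
    exact_mod_cast this
  refine ⟨Module.Basis.mk hli hspanO, fun i => ?_⟩
  rw [Module.Basis.mk_apply]
  exact hcoeβO i
end

section
/- Let θ be a root of an irreducible trinomial f(x) = x^6 + a x + b ∈ ℤ[x]. If v_2(b) = 2 and v_2(a) ≥ 3, then the element (θ^3 + 2)·θ^2 / 4 of ℚ(θ) is integral over the localization ℤ_{(2)} of ℤ at the prime 2. -/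
open Polynomial NumberField

/-- Lemma (i): if `v₂(b) = 2` and `v₂(a) ≥ 3`, then `(θ³ + 2)·θ²/4` is integral over
the localization `ℤ₍₂₎` of `ℤ` at the prime `2` (here `R` is any realization of this
localization, mapping to `K` compatibly with `ℤ`). -/
theorem sextic_trinomial_theta_cubed_add_two_mul_sq_div_four_integral
    (a b : ℤ) (K : Type) [Field K] [NumberField K] (θ : K)
    (hf : Irreducible ((X : ℚ[X]) ^ 6 + C (a : ℚ) * X + C (b : ℚ)))
    (hroot : θ ^ 6 + (a : K) * θ + (b : K) = 0)
    (hK : IntermediateField.adjoin ℚ {θ} = ⊤)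
    (hb : (2 ^ 2 : ℤ) ∣ b ∧ ¬ (2 ^ 3 : ℤ) ∣ b) (ha : (2 ^ 3 : ℤ) ∣ a)
    (R : Type) [CommRing R] [Algebra ℤ R]
    [hpr : (Ideal.span {(2 : ℤ)}).IsPrime]
    [IsLocalization.AtPrime R (Ideal.span {(2 : ℤ)})]
    [Algebra R K] [IsScalarTower ℤ R K] :
    IsIntegral R ((θ ^ 3 + 2) * θ ^ 2 / 4) := by
  obtain ⟨b1, hb1⟩ := hb.1
  obtain ⟨a1, ha1⟩ := ha
  have hodd : ¬ (2 ∣ b1) := by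
    intro hdvd
    obtain ⟨k, hk⟩ := hdvd
    exact hb.2 ⟨k, by rw [hb1, hk]; ring⟩
  obtain ⟨m, hm⟩ : ∃ m, b1 = 2 * m + 1 := ⟨(b1 - 1) / 2, by omega⟩
  have h := hroot
  rw [ha1, hb1, hm] at h
  push_cast at h
  have hint : IsIntegral ℤ ((θ ^ 3 + 2) * θ ^ 2 / 4) := by
    refine ⟨X ^ 6 + C (10 * a1) * X ^ 5 + C (40 * a1 ^ 2) * X ^ 4 +
        C (80 * a1 ^ 3 - 3 * (2 * m + 1) ^ 2 + (2 * m + 1)) * X ^ 3 +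
        C (80 * a1 ^ 4 - 13 * a1 * (2 * m + 1) ^ 2 - a1 * (2 * m + 1)) * X ^ 2 +
        C (32 * a1 ^ 5 - 16 * a1 ^ 2 * (2 * m + 1) ^ 2 - 6 * a1 ^ 2 * (2 * m + 1) - 2 * a1 ^ 2) * X +
        C (2 * (m + 1) ^ 3 * (2 * m + 1) ^ 2 - 4 * a1 ^ 3 * (2 * m + 1) ^ 2), ?_, ?_⟩
    · monicity!
    · simp only [eval₂_add, eval₂_mul, eval₂_pow, eval₂_X, eval₂_C]
      simp only [algebraMap_int_eq, eq_intCast]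
      push_cast
      linear_combination ((1/4096 : K) * θ^24 +
      (3/1024 : K) * θ^21 +
      (1/128 : K) * (a1:K) * θ^19 +
      (7/512 : K) * θ^18 +
      (-1/512 : K) * (m:K) * θ^18 +
      (19/256 : K) * (a1:K) * θ^16 +
      (7/256 : K) * θ^15 +
      (-3/128 : K) * (m:K) * θ^15 +
      (3/32 : K) * (a1:K)^2 * θ^14 +
      (1/4 : K) * (a1:K) * θ^13 +
      (-3/64 : K) * (a1:K) * (m:K) * θ^13 +
      (1/256 : K) * θ^12 +
      (-13/128 : K) * (m:K) * θ^12 +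
      (1/64 : K) * (m:K)^2 * θ^12 +
      (21/32 : K) * (a1:K)^2 * θ^11 +
      (17/64 : K) * (a1:K) * θ^10 +
      (-13/32 : K) * (a1:K) * (m:K) * θ^10 +
      (-3/32 : K) * θ^9 +
      (-9/32 : K) * (m:K) * θ^9 +
      (1/2 : K) * (a1:K)^3 * θ^9 +
      (11/8 : K) * (a1:K)^2 * θ^8 +
      (-3/8 : K) * (a1:K)^2 * (m:K) * θ^8 +
      (-1/4 : K) * (a1:K) * θ^7 +
      (-1 : K) * (a1:K) * (m:K) * θ^7 +
      (1/4 : K) * (a1:K) * (m:K)^2 * θ^7 +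
      (-3/16 : K) * θ^6 +
      (-9/16 : K) * (m:K) * θ^6 +
      (-3/8 : K) * (m:K)^2 * θ^6 +
      (-1/8 : K) * (m:K)^3 * θ^6 +
      (9/4 : K) * (a1:K)^3 * θ^6 +
      (1/4 : K) * (a1:K)^2 * θ^5 +
      (-2 : K) * (a1:K)^2 * (m:K) * θ^5 +
      (-7/8 : K) * (a1:K) * θ^4 +
      (-13/8 : K) * (a1:K) * (m:K) * θ^4 +
      (1 : K) * (a1:K)^4 * θ^4 +
      (2 : K) * (a1:K)^3 * θ^3 +
      (-1 : K) * (a1:K)^3 * (m:K) * θ^3 +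
      (-1 : K) * (a1:K)^2 * θ^2 +
      (-3/2 : K) * (a1:K)^2 * (m:K) * θ^2 +
      (1 : K) * (a1:K)^2 * (m:K)^2 * θ^2 +
      (-1 : K) * (a1:K) * θ +
      (-3 : K) * (a1:K) * (m:K) * θ +
      (-3 : K) * (a1:K) * (m:K)^2 * θ +
      (-1 : K) * (a1:K) * (m:K)^3 * θ +
      (2 : K) * (a1:K)^4 * θ +
      (1/2 : K) +
      (5/2 : K) * (m:K) +
      (9/2 : K) * (m:K)^2 +
      (7/2 : K) * (m:K)^3 +
      (1 : K) * (m:K)^4 +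
      (-1 : K) * (a1:K)^3 +
      (-2 : K) * (a1:K)^3 * (m:K)) * h
  obtain ⟨p, hpm, hpe⟩ := hint
  refine ⟨p.map (algebraMap ℤ R), hpm.map _, ?_⟩
  rw [eval₂_map, RingHom.eq_intCast' ((algebraMap R K).comp (algebraMap ℤ R))]
  rwa [algebraMap_int_eq] at hpe
end

section
/- Let θ be a root of an irreducible trinomial f(x) = x^6 + a x + b ∈ ℤ[x]. If v_2(a) = v_2(b) = 4 and b/16 ≡ 1 (mod 4), then the element (θ^5 + 4θ^2 + 8θ)/16 of ℚ(θ) is integral over the localization ℤ_{(2)} of ℤ at the prime 2. -/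
open Polynomial NumberField

set_option maxRecDepth 100000 in
set_option maxHeartbeats 2000000 in
/-- Lemma (iv): if `v₂(a) = v₂(b) = 4` and `b/16 ≡ 1 (mod 4)`, then
`(θ⁵ + 4θ² + 8θ)/16` is integral over the localization `ℤ₍₂₎` of `ℤ` at the
prime `2`. -/
theorem sextic_trinomial_theta5_integral_over_Z2
    (a b : ℤ) (K : Type) [Field K] [NumberField K] (θ : K)
    (hf : Irreducible ((X : ℚ[X]) ^ 6 + C (a : ℚ) * X + C (b : ℚ)))
    (hroot : θ ^ 6 + (a : K) * θ + (b : K) = 0)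
    (hK : IntermediateField.adjoin ℚ {θ} = ⊤)
    (ha : (2 ^ 4 : ℤ) ∣ a ∧ ¬ (2 ^ 5 : ℤ) ∣ a)
    (hb : (2 ^ 4 : ℤ) ∣ b ∧ ¬ (2 ^ 5 : ℤ) ∣ b)
    (hb16 : (b / 16) % 4 = 1)
    (R : Type) [CommRing R] [Algebra ℤ R]
    [hpr : (Ideal.span {(2 : ℤ)}).IsPrime]
    [IsLocalization.AtPrime R (Ideal.span {(2 : ℤ)})]
    [Algebra R K] [IsScalarTower ℤ R K] :
    IsIntegral R ((θ ^ 5 + 4 * θ ^ 2 + 8 * θ) / 16) := by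
  -- extract a = 16*(2s+1), b = 16*(4t+1)
  obtain ⟨A, hA⟩ := ha.1
  obtain ⟨B, hB⟩ := hb.1
  have hAodd : Odd A := by
    rw [← Int.not_even_iff_odd]
    rintro ⟨c, hc⟩
    exact ha.2 ⟨c, by rw [hA, hc]; ring⟩
  obtain ⟨s, hs⟩ := hAodd
  have hBmod : B % 4 = 1 := by
    have : b / 16 = B := by rw [hB]; norm_num
    rwa [this] at hb16
  have hBeq : B = 4 * (B / 4) + 1 := by omega
  set t := B / 4 with ht
  have ha' : a = 16 * (2 * s + 1) := by rw [hA, hs]; ring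
  have hb' : b = 16 * (4 * t + 1) := by rw [hB, hBeq]; ring
  have hroot' : θ ^ 6 + 16 * (2 * (s : K) + 1) * θ + 16 * (4 * (t : K) + 1) = 0 := by
    rw [ha', hb'] at hroot
    push_cast at hroot
    linear_combination hroot
  have hint : IsIntegral ℤ ((θ ^ 5 + 4 * θ ^ 2 + 8 * θ) / 16) := by
    refine ⟨X^6 + C (5 + 10*s) * X^5 + C (13 + 12*t + 40*s + 40*s^2) * X^4 + C (21 + 28*t + (-24)*t^2 + 84*s + 76*s*t + 120*s^2 + 80*s^3) * X^3 + C (24 + 42*t + (-16)*t^2 + 100*s + 114*s*t + (-104)*s*t^2 + 182*s^2 + 168*s^2*t + 160*s^3 + 80*s^4) * X^2 + C (12 + 10*t + (-76)*t^2 + (-96)*t^3 + 62*s + 102*s*t + (-24)*s*t^2 + 122*s^2 + 140*s^2*t + (-128)*s^2*t^2 + 136*s^3 + 144*s^3*t + 80*s^4 + 32*s^5) * X + C (2 + 4*t + (-8)*t^2 + 60*t^3 + 128*t^4 + 64*t^5 + 10*s + 28*s*t + (-76)*s*t^2 + (-112)*s*t^3 + 18*s^2 + 76*s^2*t + 16*s^2*t^2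 + 14*s^3 + 48*s^3*t + (-32)*s^3*t^2 + 8*s^4 + 32*s^4*t), ?_, ?_⟩
    · monicity!
    · have key : (θ^5 + 4*θ^2 + 8*θ)^6
          + 16 * ((5 + 10*(s:K))) * (θ^5 + 4*θ^2 + 8*θ)^5
          + 16^2 * ((13 + 12*(t:K) + 40*(s:K) + 40*(s:K)^2)) * (θ^5 + 4*θ^2 + 8*θ)^4
          + 16^3 * ((21 + 28*(t:K) + (-24)*(t:K)^2 + 84*(s:K) + 76*(s:K)*(t:K) + 120*(s:K)^2 + 80*(s:K)^3)) * (θ^5 + 4*θ^2 + 8*θ)^3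
          + 16^4 * ((24 + 42*(t:K) + (-16)*(t:K)^2 + 100*(s:K) + 114*(s:K)*(t:K) + (-104)*(s:K)*(t:K)^2 + 182*(s:K)^2 + 168*(s:K)^2*(t:K) + 160*(s:K)^3 + 80*(s:K)^4)) * (θ^5 + 4*θ^2 + 8*θ)^2
          + 16^5 * ((12 + 10*(t:K) + (-76)*(t:K)^2 + (-96)*(t:K)^3 + 62*(s:K) + 102*(s:K)*(t:K) + (-24)*(s:K)*(t:K)^2 + 122*(s:K)^2 + 140*(s:K)^2*(t:K) + (-128)*(s:K)^2*(t:K)^2 + 136*(s:K)^3 + 144*(s:K)^3*(t:K) + 80*(s:K)^4 + 32*(s:K)^5)) * (θ^5 + 4*θ^2 + 8*θ)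
          + 16^6 * ((2 + 4*(t:K) + (-8)*(t:K)^2 + 60*(t:K)^3 + 128*(t:K)^4 + 64*(t:K)^5 + 10*(s:K) + 28*(s:K)*(t:K) + (-76)*(s:K)*(t:K)^2 + (-112)*(s:K)*(t:K)^3 + 18*(s:K)^2 + 76*(s:K)^2*(t:K) + 16*(s:K)^2*(t:K)^2 + 14*(s:K)^3 + 48*(s:K)^3*(t:K) + (-32)*(s:K)^3*(t:K)^2 + 8*(s:K)^4 + 32*(s:K)^4*(t:K))) = 0 := by
        linear_combination ((2097152 + (-4194304)*(t:K) + 8388608*(t:K)^2 + 29360128*(t:K)^3 + 16777216*(t:K)^4 + 10485760*(s:K) + (-12582912)*(s:K)*(t:K) + (-29360128)*(s:K)*(t:K)^2 + 18874368*(s:K)^2 + 4194304*(s:K)^2*(t:K) + 14680064*(s:K)^3 + (-8388608)*(s:K)^3*(t:K) + 8388608*(s:K)^4) + (4194304 + (-7340032)*(t:K) + (-18874368)*(t:K)^2 + (-4194304)*(t:K)^3 + 17825792*(s:K) + 3145728*(s:K)*(t:K) + (-12582912)*(s:K)*(t:K)^2 + (-8388608)*(s:K)*(t:K)^3 + 24117248*(s:K)^2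 + (-2097152)*(s:K)^2*(t:K) + 18874368*(s:K)^3 + 4194304*(s:K)^4) * θ + (5242880 + (-5242880)*(t:K)^2 + 16252928*(s:K) + 3145728*(s:K)*(t:K) + 4194304*(s:K)*(t:K)^2 + 19922944*(s:K)^2 + (-3145728)*(s:K)^2*(t:K) + 4194304*(s:K)^2*(t:K)^2 + 10485760*(s:K)^3) * θ^2 + (3801088 + (-524288)*(t:K) + 10485760*(s:K) + (-5242880)*(s:K)*(t:K) + 11010048*(s:K)^2 + (-3145728)*(s:K)^2*(t:K) + 2097152*(s:K)^3 + (-2097152)*(s:K)^3*(t:K)) * θ^3 + (2752512 + (-1441792)*(t:K) + 7602176*(s:K) + (-1703936)*(s:K)*(t:K) + 6160384*(s:K)^2 + 2097152*(s:K)^3 + 1048576*(s:K)^4) * θ^4 + (1966080 + (-1441792)*(t:K) + (-1572864)*(t:K)^2 + 4784128*(s:K) + (-393216)*(s:K)*(t:K) + 3670016*(s:K)^2 + (-2097152)*(s:K)^2*(t:K) + 2359296*(s:K)^3) * θ^5 + (1523712 + (-393216)*(t:K)^2 + (-262144)*(t:K)^3 + 3309568*(s:K) + (-458752)*(s:K)*(t:K)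 + 3407872*(s:K)^2 + 1179648*(s:K)^3) * θ^6 + (917504 + (-65536)*(t:K) + 131072*(t:K)^2 + 2064384*(s:K) + (-524288)*(s:K)*(t:K) + 262144*(s:K)*(t:K)^2 + 1638400*(s:K)^2) * θ^7 + (532480 + (-245760)*(t:K) + 1097728*(s:K) + (-196608)*(s:K)*(t:K) + 360448*(s:K)^2 + (-196608)*(s:K)^2*(t:K)) * θ^8 + (321536 + (-73728)*(t:K) + 487424*(s:K) + 196608*(s:K)^2 + 131072*(s:K)^3) * θ^9 + (161792 + (-16384)*(t:K) + 206848*(s:K) + (-106496)*(s:K)*(t:K) + 172032*(s:K)^2) * θ^10 + (84992 + (-12288)*(t:K) + 157696*(s:K) + 86016*(s:K)^2) * θ^11 + (46336 + (-13312)*(t:K) + 4096*(t:K)^2 + 71680*(s:K)) * θ^12 + (23552 + (-3072)*(t:K) + 16384*(s:K) + (-6144)*(s:K)*(t:K)) * θ^13 + (9216 + 6144*(s:K) + 6144*(s:K)^2) * θ^14 + (3328 + (-1536)*(t:K) + 4864*(s:K)) * θ^15 + (2176 + 2432*(s:K)) * θ^16 + (960) * θ^17 + (224 + (-64)*(t:K))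 * θ^18 + (64 + 128*(s:K)) * θ^19 + (48) * θ^20 + (24) * θ^21 + (1) * θ^24) * hroot'
      simp only [eval₂_add, eval₂_mul, eval₂_pow, eval₂_X, eval₂_C]
      simp only [algebraMap_int_eq, eq_intCast]
      push_cast
      linear_combination ((1:K)/16^6) * key
  obtain ⟨p, hmon, hev⟩ := hint
  refine ⟨p.map (algebraMap ℤ R), hmon.map _, ?_⟩
  rw [eval₂_map]
  have hcomp : (algebraMap R K).comp (algebraMap ℤ R) = algebraMap ℤ K :=
    RingHom.ext_int _ _
  rw [hcomp]
  exact hev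
end

section
/- Let θ be a root of an irreducible trinomial f(x) = x^6 + a x + b ∈ ℤ[x]. If v_2(b) = 4, v_2(a) ≥ 6 and b/16 ≡ 3 (mod 4), then the element (θ^3 + 4)/8 of ℚ(θ) is integral over the localization ℤ_{(2)} of ℤ at the prime 2. -/
open Polynomial NumberField

/-- Lemma (vi): if `v₂(b) = 4`, `v₂(a) ≥ 6` and `b/16 ≡ 3 (mod 4)`, then
`(θ³ + 4)/8` is integral over the localization `ℤ₍₂₎` of `ℤ` at the prime `2`. -/
theorem sextic_trinomial_theta3_add_four_div_eight_integral_over_Z2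
    (a b : ℤ) (K : Type) [Field K] [NumberField K] (θ : K)
    (hf : Irreducible ((X : ℚ[X]) ^ 6 + C (a : ℚ) * X + C (b : ℚ)))
    (hroot : θ ^ 6 + (a : K) * θ + (b : K) = 0)
    (hK : IntermediateField.adjoin ℚ {θ} = ⊤)
    (hb : (2 ^ 4 : ℤ) ∣ b ∧ ¬ (2 ^ 5 : ℤ) ∣ b)
    (ha : (2 ^ 6 : ℤ) ∣ a)
    (hb16 : (b / 16) % 4 = 3)
    (R : Type) [CommRing R] [Algebra ℤ R]
    [hpr : (Ideal.span {(2 : ℤ)}).IsPrime]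
    [IsLocalization.AtPrime R (Ideal.span {(2 : ℤ)})]
    [Algebra R K] [IsScalarTower ℤ R K] :
    IsIntegral R ((θ ^ 3 + 4) / 8) := by
  obtain ⟨c, rfl⟩ := hb.1
  obtain ⟨d, rfl⟩ := ha
  obtain ⟨e, he⟩ : ∃ e : ℤ, c = 4 * e - 1 := ⟨(c + 1) / 4, by omega⟩
  subst he
  push_cast at hroot
  have hint : IsIntegral ℤ ((θ ^ 3 + 4) / 8) := by
    refine ⟨(X ^ 2 - X + C e) ^ 3 + (C (8 * d ^ 3) * X - C (4 * d ^ 3)), ?_, ?_⟩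
    · apply Polynomial.Monic.add_of_left
      · have heq : (X:ℤ[X]) ^ 2 - X + C e = X ^ 2 - (X - C e) := by ring
        rw [heq]
        exact ((monic_X_pow_sub (by
          rw [Polynomial.degree_X_sub_C]; exact_mod_cast one_lt_two)).pow 3)
      · apply lt_of_le_of_lt (Polynomial.degree_sub_le _ _)
        have h6 : (((X:ℤ[X]) ^ 2 - X + C e) ^ 3).degree = 6 := by
          compute_degree!
        rw [h6]
        apply max_lt
        · apply lt_of_le_of_lt (Polynomial.degree_mul_le _ _)
          calc (C (8 * d ^ 3) : ℤ[X]).degree + (X : ℤ[X]).degree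
              ≤ 0 + 1 := add_le_add degree_C_le degree_X.le
            _ < 6 := by norm_num
        · exact lt_of_le_of_lt degree_C_le (by norm_num)
    · have h8 : (8 : K) ≠ 0 := by norm_num
      simp only [Polynomial.aeval_def, Polynomial.eval₂_add, Polynomial.eval₂_sub,
        Polynomial.eval₂_mul, Polynomial.eval₂_pow, Polynomial.eval₂_X,
        Polynomial.eval₂_C, algebraMap_int_eq, Int.coe_castRingHom]
      push_cast
      have h1 : ((θ ^ 3 + 4) / 8) ^ 2 - ((θ ^ 3 + 4) / 8) + (e : K)
          = -(d : K) * θ := by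
        linear_combination (1 / 64 : K) * hroot
      linear_combination ((((θ ^ 3 + 4) / 8) ^ 2 - ((θ ^ 3 + 4) / 8) + (e : K)) ^ 2
        - (((θ ^ 3 + 4) / 8) ^ 2 - ((θ ^ 3 + 4) / 8) + (e : K)) * ((d : K) * θ)
        + ((d : K) * θ) ^ 2) * h1
  obtain ⟨p, hp, hpe⟩ := hint
  refine ⟨p.map (algebraMap ℤ R), hp.map _, ?_⟩
  rw [Polynomial.eval₂_map]
  rw [show ((algebraMap R K).comp (algebraMap ℤ R)) = algebraMap ℤ K from
    RingHom.ext_int _ _]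
  exact hpe
end

section
/- Let K = ℚ(θ) where θ is a root of an irreducible trinomial f(x) = x^6 + a x + b ∈ ℤ[x], and let p > 5 be a prime dividing neither a nor b. Then there do not exist integers x, y, z, v such that (x + yθ + zθ^2 + vθ^3 + θ^4)/p is an algebraic integer. -/
open Polynomial NumberField UniqueFactorizationMonoid EuclideanDomain

set_option maxHeartbeats 1000000 in
set_option synthInstance.maxHeartbeats 200000 in
/-- If `p > 5` is a prime dividing neither `a` nor `b`, then there are no integers
`x, y, z, v` such that `(x + yθ + zθ² + vθ³ + θ⁴)/p` is an algebraic integer. -/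
theorem sextic_trinomial_no_p_integral_quartic (a b : ℤ) (K : Type) [Field K]
    [NumberField K] (θ : K)
    (hf : Irreducible ((X : ℚ[X]) ^ 6 + C (a : ℚ) * X + C (b : ℚ)))
    (hroot : θ ^ 6 + (a : K) * θ + (b : K) = 0)
    (hK : IntermediateField.adjoin ℚ {θ} = ⊤)
    (p : ℕ) (hp : p.Prime) (hp5 : 5 < p)
    (hpa : ¬ (p : ℤ) ∣ a) (hpb : ¬ (p : ℤ) ∣ b) :
    ¬ ∃ x y z v : ℤ,
      IsIntegral ℤ (((x : K) + (y : K) * θ + (z : K) * θ ^ 2 + (v : K) * θ ^ 3 + θ ^ 4)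
        / (p : K)) := by
  haveI : Fact p.Prime := ⟨hp⟩
  rintro ⟨x, y, z, v, hint⟩
  set α : K := ((x : K) + (y : K) * θ + (z : K) * θ ^ 2 + (v : K) * θ ^ 3 + θ ^ 4) / (p : K)
    with hα
  -- the trinomial over ℤ
  set f : ℤ[X] := X ^ 6 + C a * X + C b with hfdef
  have hfmonic : f.Monic := by
    have h1 : (C a * X + C b).degree < ((6 : ℕ) : WithBot ℕ) :=
      lt_of_le_of_lt degree_linear_le (by norm_num)
    simpa [hfdef, add_assoc] using monic_X_pow_add h1
  have haevalf : aeval θ f = 0 := by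
    simp only [hfdef, map_add, map_mul, map_pow, aeval_X, aeval_C]
    simpa using hroot
  have hθ : IsIntegral ℤ θ := ⟨f, hfmonic, by rw [← aeval_def]; exact haevalf⟩
  -- relate to the minimal polynomial over ℤ
  have hmap : f.map (algebraMap ℤ ℚ) = (X : ℚ[X]) ^ 6 + C (a : ℚ) * X + C (b : ℚ) := by
    simp [hfdef]
  have hminQ : minpoly ℚ θ = f.map (algebraMap ℤ ℚ) := by
    rw [hmap]
    refine (minpoly.eq_of_irreducible_of_monic hf ?_ ?_).symm
    · simp only [map_add, map_mul, map_pow, aeval_X, aeval_C]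
      simpa using hroot
    · rw [← hmap]; exact hfmonic.map _
  have hminZ : minpoly ℤ θ = f := by
    have h2 := minpoly.isIntegrallyClosed_eq_field_fractions' ℚ hθ
    have h3 : (minpoly ℤ θ).map (algebraMap ℤ ℚ) = f.map (algebraMap ℤ ℚ) := by
      rw [← h2, hminQ]
    exact Polynomial.map_injective _ (fun m n h => by exact_mod_cast h) h3
  have hdvdf : ∀ h : ℤ[X], aeval θ h = 0 → f ∣ h := fun h hh =>
    hminZ ▸ minpoly.isIntegrallyClosed_dvd hθ hh
  -- the ring of integers
  set S := integralClosure ℤ K with hSdef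
  set θS : S := ⟨θ, hθ⟩ with hθS
  set αS : S := ⟨α, hint⟩ with hαS
  have hvalaeval : ∀ (h : ℤ[X]) (s : S), ((aeval s h : S) : K) = aeval (s : K) h := by
    intro h s
    obtain ⟨w, hw⟩ := s
    exact coe_aeval_mk_apply (R := ℤ) (A := K) (x := w) (p := h) hw
  have hθSval : (θS : K) = θ := rfl
  have hαSval : (αS : K) = α := rfl
  -- the quartic numerator
  set g : ℤ[X] := X ^ 4 + (C v * X ^ 3 + C z * X ^ 2 + C y * X + C x) with hgdef
  have hpK : (p : K) ≠ 0 := by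
    exact_mod_cast hp.ne_zero
  have hgθ : aeval θ g = (p : K) * α := by
    rw [hα, mul_div_cancel₀ _ hpK]
    simp only [hgdef, map_add, map_mul, map_pow, aeval_X, aeval_C, eq_intCast, map_intCast]
    ring
  have hgS : aeval θS g = ((p : ℤ) : S) * αS := by
    apply Subtype.ext
    calc ((aeval θS g : S) : K) = aeval (θS : K) g := hvalaeval g θS
      _ = aeval θ g := by rw [hθSval]
      _ = (p : K) * α := hgθ
      _ = ((((p : ℤ) : S) * αS : S) : K) := by push_cast [hαSval]; norm_num
  -- reductions mod p
  set Fp := ZMod p with hFp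
  set fbar : Fp[X] := f.map (Int.castRingHom Fp) with hfbar
  set gbar : Fp[X] := g.map (Int.castRingHom Fp) with hgbar
  -- Claim A : every monic irreducible factor of fbar divides gbar
  have claimA : ∀ q : Fp[X], q.Monic → Irreducible q → q ∣ fbar → q ∣ gbar := by
    intro q hqmonic hqirr hqf
    haveI : Fact (Irreducible q) := ⟨hqirr⟩
    obtain ⟨φ, hφ⟩ := Polynomial.map_surjective (Int.castRingHom Fp)
      ZMod.intCast_surjective q
    set F := AdjoinRoot q with hF
    set t : F := AdjoinRoot.root q with ht
    have hcomp : (algebraMap Fp F).comp (Int.castRingHom Fp) = Int.castRingHom F :=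
      Subsingleton.elim _ _
    have heval2 : ∀ h : ℤ[X], h.eval₂ (Int.castRingHom F) t =
        aeval t (h.map (Int.castRingHom Fp)) := by
      intro h
      rw [aeval_def, eval₂_map, hcomp]
    have hf0 : f.eval₂ (Int.castRingHom F) t = 0 := by
      rw [heval2, ← hfbar]
      obtain ⟨c, hc⟩ := hqf
      rw [hc, map_mul]
      rw [AdjoinRoot.aeval_eq, AdjoinRoot.mk_self, zero_mul]
    set ψ : AdjoinRoot f →+* F := AdjoinRoot.lift (Int.castRingHom F) t hf0 with hψ
    -- map AdjoinRoot f into S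
    have hfS0 : f.eval₂ (algebraMap ℤ S) θS = 0 := by
      apply Subtype.ext
      rw [← aeval_def]
      calc ((aeval θS f : S) : K) = aeval (θS : K) f := hvalaeval f θS
        _ = aeval θ f := by rw [hθSval]
        _ = 0 := haevalf
        _ = ((0 : S) : K) := by norm_num
    set π : AdjoinRoot f →+* S := AdjoinRoot.lift (algebraMap ℤ S) θS hfS0 with hπ
    letI : Algebra (AdjoinRoot f) S := π.toAlgebra
    have halgmap : algebraMap (AdjoinRoot f) S = π := rfl
    haveI : IsScalarTower ℤ (AdjoinRoot f) S :=
      IsScalarTower.of_algebraMap_eq (fun n =>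
        RingHom.congr_fun (Subsingleton.elim (algebraMap ℤ S)
          ((algebraMap (AdjoinRoot f) S).comp (algebraMap ℤ (AdjoinRoot f)))) n)
    haveI : Algebra.IsIntegral (AdjoinRoot f) S :=
      ⟨fun s => IsIntegral.tower_top (IsIntegralClosure.isIntegral ℤ K s)⟩
    set P := RingHom.ker ψ with hP
    haveI hPprime : P.IsPrime := RingHom.ker_isPrime ψ
    have hker : RingHom.ker (algebraMap (AdjoinRoot f) S) ≤ P := by
      intro r hr
      obtain ⟨h, rfl⟩ := AdjoinRoot.mk_surjective r
      rw [RingHom.mem_ker, halgmap, hπ, AdjoinRoot.lift_mk] at hr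
      have : aeval θ h = 0 := by
        rw [← aeval_def] at hr
        have := hvalaeval h θS
        rw [hr, hθSval] at this
        exact this.symm.trans rfl
      have hfh : f ∣ h := hdvdf h this
      rw [RingHom.mem_ker, AdjoinRoot.mk_eq_zero.2 hfh, map_zero]
    obtain ⟨Q, hQprime, hQcomap⟩ :=
      Ideal.exists_ideal_over_prime_of_isIntegral_of_isDomain P hker
    -- facts in Q
    have hmem : ∀ r : AdjoinRoot f, π r ∈ Q ↔ ψ r = 0 := by
      intro r
      constructor
      · intro h
        have : r ∈ Ideal.comap (algebraMap (AdjoinRoot f) S) Q := h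
        rw [hQcomap] at this
        exact this
      · intro h
        have : r ∈ P := h
        rw [← hQcomap] at this
        exact this
    have hpQ : ((p : ℤ) : S) ∈ Q := by
      have h1 : π ((p : ℤ) : AdjoinRoot f) = ((p : ℤ) : S) := map_intCast π _
      rw [← h1, hmem]
      rw [map_intCast]
      haveI : CharP F p := charP_of_injective_algebraMap (algebraMap Fp F).injective p
      rw [CharP.intCast_eq_zero_iff F p]
    have hφQ : aeval θS φ ∈ Q := by
      have h1 : π (AdjoinRoot.mk f φ) = aeval θS φ := by
        rw [hπ, AdjoinRoot.lift_mk, aeval_def]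
      rw [← h1, hmem, hψ, AdjoinRoot.lift_mk, heval2, hφ, AdjoinRoot.aeval_eq,
        AdjoinRoot.mk_self]
    have hgQ : aeval θS g ∈ Q := by
      rw [hgS]
      exact Ideal.mul_mem_right _ _ hpQ
    -- the residue ring
    set κ := S ⧸ Q with hκ
    haveI : Q.IsPrime := hQprime
    have hpκ : ((p : ℕ) : κ) = 0 := by
      have h0 : Ideal.Quotient.mk Q (((p : ℕ) : ℤ) : S) = 0 :=
        Ideal.Quotient.eq_zero_iff_mem.2 hpQ
      have h1 : ((((p : ℕ) : ℤ)) : κ) = 0 := by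
        rw [← map_intCast (Ideal.Quotient.mk Q) (((p : ℕ) : ℤ))]
        exact h0
      exact_mod_cast h1
    have hchar : ringChar κ = p := by
      have h1 : ringChar κ ∣ p := ringChar.dvd hpκ
      rcases (Nat.Prime.eq_one_or_self_of_dvd hp _ h1) with h | h
      · exfalso
        haveI : Nontrivial κ := Ideal.Quotient.nontrivial_iff.mpr hQprime.ne_top
        haveI : CharP κ 1 := ringChar.of_eq h
        exact CharP.char_ne_one κ 1 rfl
      · exact h
    haveI : CharP κ p := ringChar.of_eq hchar
    letI : Algebra Fp κ := ZMod.algebra κ p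
    set θκ : κ := Ideal.Quotient.mk Q θS with hθκ
    have hevalκ : ∀ h : ℤ[X], Ideal.Quotient.mk Q (aeval θS h) =
        aeval θκ (h.map (Int.castRingHom Fp)) := by
      intro h
      rw [aeval_def, aeval_def, Polynomial.hom_eval₂, eval₂_map,
        Subsingleton.elim ((Ideal.Quotient.mk Q : S →+* κ).comp (algebraMap ℤ S))
          ((algebraMap Fp κ).comp (Int.castRingHom Fp))]
    have hqκ : aeval θκ q = 0 := by
      rw [← hφ, ← hevalκ, Ideal.Quotient.eq_zero_iff_mem]
      exact hφQ
    have hgκ : aeval θκ gbar = 0 := by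
      rw [hgbar, ← hevalκ, Ideal.Quotient.eq_zero_iff_mem]
      exact hgQ
    -- conclude q ∣ gbar via minimal polynomials over Fp
    have hmin : minpoly Fp θκ = q :=
      (minpoly.eq_of_irreducible_of_monic hqirr hqκ hqmonic).symm
    rw [← hmin]
    exact minpoly.dvd Fp θκ hgκ
  -- now the factorization argument in Fp[X]
  have hfbar_eq : fbar = X ^ 6 + C ((a : ℤ) : Fp) * X + C ((b : ℤ) : Fp) := by
    simp [hfbar, hfdef, Polynomial.map_add, Polynomial.map_mul, Polynomial.map_pow]
    rw [C_eq_intCast, C_eq_intCast]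
  have hfbar_deg : fbar.degree = 6 := by
    rw [hfbar_eq, add_assoc]
    rw [degree_add_eq_left_of_degree_lt]
    · exact degree_X_pow 6
    · rw [degree_X_pow]
      exact lt_of_le_of_lt degree_linear_le (by norm_num)
  have hfbar_ne : fbar ≠ 0 := fun h => by simp [h] at hfbar_deg
  have hgbar_eq : gbar = X ^ 4 +
      (C ((v : ℤ) : Fp) * X ^ 3 + C ((z : ℤ) : Fp) * X ^ 2 + C ((y : ℤ) : Fp) * X
        + C ((x : ℤ) : Fp)) := by
    simp [hgbar, hgdef, Polynomial.map_add, Polynomial.map_mul, Polynomial.map_pow]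
    rw [C_eq_intCast, C_eq_intCast, C_eq_intCast, C_eq_intCast]
  have hgbar_deg : gbar.degree = 4 := by
    rw [hgbar_eq]
    rw [degree_add_eq_left_of_degree_lt]
    · exact degree_X_pow 4
    · rw [degree_X_pow]
      exact lt_of_le_of_lt degree_cubic_le (by norm_num)
  have hgbar_ne : gbar ≠ 0 := fun h => by simp [h] at hgbar_deg
  -- radical of fbar divides gbar
  have hrad : radical fbar ∣ gbar := by
    letI : ∀ a : Fp[X], DecidablePred (Associated a) := fun a => Classical.decPred _
    have hmemPF : ∀ r : Fp[X], r ∈ (primeFactors fbar).val → r ∈ normalizedFactors fbar := by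
      intro r hr
      exact (@Multiset.mem_toFinset _ (fun a b => Classical.propDecidable (a = b)) r
        (normalizedFactors fbar)).1 hr
    show (primeFactors fbar).prod id ∣ gbar
    rw [Finset.prod, Multiset.map_id]
    apply Multiset.prod_primes_dvd
    · intro q hq
      exact prime_of_normalized_factor q (hmemPF q hq)
    · intro q hq
      have hq' := hmemPF q hq
      have hqprime := prime_of_normalized_factor q hq'
      have hqmonic : q.Monic := by
        have := normalize_normalized_factor q hq'
        rw [← this]
        exact monic_normalize hqprime.ne_zero
      exact claimA q hqmonic hqprime.irreducible (dvd_of_mem_normalizedFactors hq')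
    · intro q
      rw [Multiset.countP_eq_card_filter]
      have hnodup : (Multiset.filter (Associated q) (primeFactors fbar).val).Nodup :=
        Multiset.Nodup.filter _ (primeFactors fbar).nodup
      have hsub : Multiset.filter (Associated q) (primeFactors fbar).val ≤
          ({normalize q} : Multiset Fp[X]) := by
        rw [Multiset.le_iff_subset hnodup]
        intro r hr
        rw [Multiset.mem_filter] at hr
        obtain ⟨hrmem, hassoc⟩ := hr
        have h1 : normalize r = r :=
          normalize_normalized_factor r (hmemPF r hrmem)
        have h2 : normalize q = normalize r :=
          normalize_eq_normalize hassoc.dvd hassoc.symm.dvd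
        rw [Multiset.mem_singleton, h2, h1]
      simpa using Multiset.card_le_card hsub
  -- divRadical divides the linear combination
  set L : Fp[X] := C 6 * fbar - X * derivative fbar with hL
  have hdivL : divRadical fbar ∣ L := by
    apply dvd_sub
    · exact Dvd.dvd.mul_left (divRadical_dvd_self fbar) _
    · exact Dvd.dvd.mul_left (divRadical_dvd_derivative fbar) _
  have hL_eq : L = C (5 * ((a : ℤ) : Fp)) * X + C (6 * ((b : ℤ) : Fp)) := by
    rw [hL, hfbar_eq]
    rw [derivative_add, derivative_add, derivative_mul, derivative_C, derivative_X,
      derivative_X_pow, derivative_C]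
    simp only [map_mul, map_ofNat]
    ring_nf
    simp [map_ofNat]
  have h5a : (5 : Fp) * ((a : ℤ) : Fp) ≠ 0 := by
    apply mul_ne_zero
    · have : ¬ (p : ℕ) ∣ 5 := fun h => by
        have := Nat.le_of_dvd (by norm_num) h
        omega
      simpa [ZMod.natCast_eq_zero_iff] using
        (fun h => this (by exact_mod_cast (ZMod.natCast_eq_zero_iff 5 p).1 h))
    · rw [Ne, ZMod.intCast_zmod_eq_zero_iff_dvd]
      exact_mod_cast hpa
  have hL_deg : L.degree = 1 := by
    rw [hL_eq]
    exact degree_linear (by push_cast; exact h5a)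
  have hL_ne : L ≠ 0 := fun h => by simp [h] at hL_deg
  -- final contradiction
  have hdvd_final : fbar ∣ gbar * L := by
    calc fbar = radical fbar * divRadical fbar := radical_mul_divRadical.symm
    _ ∣ gbar * L := mul_dvd_mul hrad hdivL
  have hdeg : (gbar * L).degree < fbar.degree := by
    rw [degree_mul, hgbar_deg, hL_deg, hfbar_deg]
    norm_num
  have := Polynomial.eq_zero_of_dvd_of_degree_lt hdvd_final hdeg
  exact mul_ne_zero hgbar_ne hL_ne this
end
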